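/- (Generalized Nikiforov bound.) Let G be a finite simple graph on n vertices with at least one edge and chromatic number χ. Then for every m with 1 ≤ m ≤ n: Σ_{i=1}^m μ_i ≤ (χ − 1)·Σ_{i=1}^m (θ_i − μ_i). -/

import Mathlib

open Matrix Finset Complex

lemma card_filter_lt_fin {n m : ℕ} (hmn : m ≤ n) :
    (Finset.univ.filter (fun i : Fin n => (i : ℕ) < m)).card = m := by
  rw [Finset.card_filter, Fin.sum_univ_eq_sum_range (fun i => if i < m then 1 else 0),
    ← Finset.card_filter]
  have h : (Finset.range n).filter (fun i => i < m) = Finset.range m := by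
    ext i; simp only [Finset.mem_filter, Finset.mem_range]; omega
  rw [h, Finset.card_range]

lemma fanSum {n m : ℕ} (hm1 : 1 ≤ m) (hmn : m ≤ n) (θ f : Fin n → ℝ) (hθa : Antitone θ)
    (e : Equiv.Perm (Fin n)) (hef : θ = f ∘ e) (p : Fin n → ℝ)
    (hp0 : ∀ i, 0 ≤ p i) (hp1 : ∀ i, p i ≤ 1) (hps : ∑ i, p i = m) :
    ∑ i, f i * p i ≤ ∑ i ∈ Finset.univ.filter (fun i : Fin n => (i : ℕ) < m), θ i := by
  have hmn' : m - 1 < n := by omega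
  set t : ℝ := θ ⟨m - 1, hmn'⟩ with ht
  have key1 : ∀ i : Fin n, f i * p i ≤ max (f i - t) 0 + t * p i := by
    intro i
    rcases le_total (f i) t with h | h
    · rw [max_eq_right (by linarith)]; nlinarith [hp0 i, hp1 i]
    · rw [max_eq_left (by linarith)]; nlinarith [hp0 i, hp1 i]
  have key2 : ∑ i, f i * p i ≤ (∑ i, max (f i - t) 0) + t * m := by
    calc ∑ i, f i * p i ≤ ∑ i, (max (f i - t) 0 + t * p i) := Finset.sum_le_sum (fun i _ => key1 i)
    _ = (∑ i, max (f i - t) 0) + t * ∑ i, p i := by rw [Finset.sum_add_distrib, Finset.mul_sum]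
    _ = _ := by rw [hps]
  have key3 : ∑ i, max (f i - t) 0 = ∑ i, max (θ i - t) 0 := by
    rw [← Equiv.sum_comp e (fun i => max (f i - t) 0)]
    exact Finset.sum_congr rfl (fun i _ => by rw [hef]; rfl)
  have key4 : ∑ i, max (θ i - t) 0
      = ∑ i ∈ Finset.univ.filter (fun i : Fin n => (i : ℕ) < m), (θ i - t) := by
    rw [← Finset.sum_filter_add_sum_filter_not Finset.univ (fun i : Fin n => (i : ℕ) < m)]
    have h1 : ∀ i ∈ Finset.univ.filter (fun i : Fin n => (i : ℕ) < m),
        max (θ i - t) 0 = θ i - t := by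
      intro i hi
      simp only [Finset.mem_filter] at hi
      have : t ≤ θ i := hθa (by simp [Fin.le_def]; omega)
      simp [max_eq_left, sub_nonneg.2 this]
    have h2 : ∀ i ∈ Finset.univ.filter (fun i : Fin n => ¬ ((i : ℕ) < m)),
        max (θ i - t) 0 = 0 := by
      intro i hi
      simp only [Finset.mem_filter] at hi
      have : θ i ≤ t := hθa (by simp [Fin.le_def]; omega)
      simp [max_eq_right, sub_nonpos.2 this]
    rw [Finset.sum_congr rfl h1, Finset.sum_congr rfl h2, Finset.sum_const_zero, add_zero]
  have key5 : ∑ i ∈ Finset.univ.filter (fun i : Fin n => (i : ℕ) < m), (θ i - t)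
      = (∑ i ∈ Finset.univ.filter (fun i : Fin n => (i : ℕ) < m), θ i) - t * m := by
    rw [Finset.sum_sub_distrib, Finset.sum_const, card_filter_lt_fin hmn, nsmul_eq_mul,
      mul_comm]
  linarith [key2, key3.le, key4.le, key5.le]



noncomputable abbrev cmap {n : ℕ} (M : Matrix (Fin n) (Fin n) ℝ) : Matrix (Fin n) (Fin n) ℂ :=
  M.map Complex.ofRealHom

lemma cspec {n : ℕ} {M : Matrix (Fin n) (Fin n) ℝ} (hM : M.IsHermitian) :
    ∃ P : Matrix (Fin n) (Fin n) ℂ, Pᴴ * P = 1 ∧ P * Pᴴ = 1 ∧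
      cmap M = P * diagonal (fun i => (hM.eigenvalues i : ℂ)) * Pᴴ ∧
      ∀ i j, ∃ r : ℝ, P i j = (r : ℂ) := by
  set P₀ : Matrix (Fin n) (Fin n) ℝ := (hM.eigenvectorUnitary : Matrix (Fin n) (Fin n) ℝ)
  have h1 : star P₀ * P₀ = 1 := Unitary.star_mul_self_of_mem hM.eigenvectorUnitary.2
  have h2 : P₀ * star P₀ = 1 := Unitary.mul_star_self_of_mem hM.eigenvectorUnitary.2
  have hspec : M = P₀ * diagonal (RCLike.ofReal ∘ hM.eigenvalues) * star P₀ := hM.spectral_theorem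
  have hd : (diagonal (RCLike.ofReal ∘ hM.eigenvalues) : Matrix (Fin n) (Fin n) ℝ).map
      Complex.ofRealHom = diagonal (fun i => (hM.eigenvalues i : ℂ)) := by
    rw [Matrix.diagonal_map (by simp)]
    congr 1
  refine ⟨P₀.map Complex.ofRealHom, ?_, ?_, ?_, fun i j => ⟨P₀ i j, rfl⟩⟩
  · rw [← Matrix.conjTranspose_map _ (fun x => by simp), ← Matrix.map_mul]
    show (star P₀ * P₀).map _ = _
    rw [h1]; simp
  · rw [← Matrix.conjTranspose_map _ (fun x => by simp), ← Matrix.map_mul]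
    show (P₀ * star P₀).map _ = _
    rw [h2]; simp
  · rw [← Matrix.conjTranspose_map _ (fun x => by simp), ← hd, ← Matrix.map_mul,
      ← Matrix.map_mul]
    show M.map _ = ((P₀ * _ * star P₀).map _)
    rw [← hspec]



lemma fanTrace {n : ℕ} {M : Matrix (Fin n) (Fin n) ℝ} (hM : M.IsHermitian)
    {m : ℕ} (hm1 : 1 ≤ m) (hmn : m ≤ n) (θ : Fin n → ℝ) (hθa : Antitone θ)
    (e : Equiv.Perm (Fin n)) (hef : θ = hM.eigenvalues ∘ e)
    {ι : Type} [Fintype ι] [DecidableEq ι] (hcard : Fintype.card ι = m)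
    (W : Matrix (Fin n) ι ℂ) (hW : Wᴴ * W = 1) :
    (Matrix.trace (Wᴴ * cmap M * W)).re
      ≤ ∑ i ∈ Finset.univ.filter (fun i : Fin n => (i : ℕ) < m), θ i := by
  obtain ⟨P, hP1, hP2, hPs, -⟩ := cspec hM
  set f := hM.eigenvalues with hf
  set Y : Matrix (Fin n) ι ℂ := Pᴴ * W with hY
  have hYY : Yᴴ * Y = 1 := by
    rw [hY, conjTranspose_mul, conjTranspose_conjTranspose, Matrix.mul_assoc,
      ← Matrix.mul_assoc P, hP2, Matrix.one_mul, hW]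
  set p : Fin n → ℝ := fun i => ∑ j, Complex.normSq (Y i j) with hp
  -- column sums are 1
  have hcol : ∀ j, ∑ i, Complex.normSq (Y i j) = 1 := by
    intro j
    have h1 : (Yᴴ * Y) j j = 1 := by rw [hYY]; simp
    rw [Matrix.mul_apply] at h1
    have : ((∑ i, Complex.normSq (Y i j) : ℝ) : ℂ) = 1 := by
      rw [← h1]
      push_cast [Complex.normSq_eq_conj_mul_self]
      exact Finset.sum_congr rfl (fun i _ => rfl)
    exact_mod_cast this
  have hp0 : ∀ i, 0 ≤ p i := fun i => Finset.sum_nonneg (fun j _ => Complex.normSq_nonneg _)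
  have hps : ∑ i, p i = m := by
    rw [hp, Finset.sum_comm]
    simp only [hcol]
    simp [hcard]
  have hp1 : ∀ i, p i ≤ 1 := by
    intro i
    set Pm : Matrix (Fin n) (Fin n) ℂ := Y * Yᴴ with hPm
    have hherm : Pmᴴ = Pm := by
      rw [hPm, conjTranspose_mul, conjTranspose_conjTranspose]
    have hidem : Pm * Pm = Pm := by
      rw [hPm, Matrix.mul_assoc, ← Matrix.mul_assoc Yᴴ, hYY, Matrix.one_mul]
    have hdiag : ∀ l, Pm i l * Pm l i = (Complex.normSq (Pm i l) : ℂ) := by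
      intro l
      have : Pm l i = (starRingEnd ℂ) (Pm i l) := by
        conv_lhs => rw [← hherm]
        simp [Matrix.conjTranspose_apply]
      rw [this, Complex.mul_conj]
    have hPii : Pm i i = (p i : ℂ) := by
      rw [hPm, Matrix.mul_apply, hp]
      push_cast [← Complex.mul_conj]
      exact Finset.sum_congr rfl (fun j _ => by simp [Matrix.conjTranspose_apply])
    have hq : (p i : ℂ) = ((∑ l, Complex.normSq (Pm i l) : ℝ) : ℂ) := by
      rw [← hPii]
      conv_lhs => rw [← hidem]
      rw [Matrix.mul_apply]
      push_cast
      exact Finset.sum_congr rfl (fun l _ => hdiag l)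
    have hq' : p i = ∑ l, Complex.normSq (Pm i l) := by exact_mod_cast hq
    have hsingle : Complex.normSq (Pm i i) ≤ ∑ l, Complex.normSq (Pm i l) :=
      Finset.single_le_sum (fun l _ => Complex.normSq_nonneg _) (Finset.mem_univ i)
    rw [hPii, Complex.normSq_ofReal] at hsingle
    nlinarith [hp0 i, hq', hsingle]
  -- the trace value
  have ha : Matrix.trace (Wᴴ * cmap M * W) = ((∑ i, f i * p i : ℝ) : ℂ) := by
    have hfactor : Wᴴ * cmap M * W = Yᴴ * diagonal (fun i => (f i : ℂ)) * Y := by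
      rw [hPs, hY, conjTranspose_mul, conjTranspose_conjTranspose]
      simp only [Matrix.mul_assoc]
    rw [hfactor, Matrix.mul_assoc, Matrix.trace]
    simp only [Matrix.diag_apply, Matrix.mul_apply, Matrix.diagonal_apply, ite_mul, zero_mul,
      Finset.sum_ite_eq, Finset.mem_univ, if_true]
    rw [Finset.sum_comm]
    simp only [hp]
    push_cast
    refine Finset.sum_congr rfl (fun i _ => ?_)
    rw [Finset.mul_sum]
    refine Finset.sum_congr rfl (fun x _ => ?_)
    simp only [Matrix.conjTranspose_apply, Complex.normSq_eq_conj_mul_self, Complex.star_def]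
    ring
  rw [ha, Complex.ofReal_re]
  exact fanSum hm1 hmn θ f hθa e hef p hp0 hp1 hps


lemma colorSum {n k : ℕ} (hk : 0 < k) (G : SimpleGraph (Fin n)) [DecidableRel G.Adj]
    (c : Fin n → Fin k) (hc : ∀ u v, G.Adj u v → c u ≠ c v) :
    ∑ s ∈ Finset.range k,
      Matrix.diagonal (fun v => (Complex.exp (2 * Real.pi * Complex.I / k) ^ (c v : ℕ)) ^ s)
        * G.lapMatrix ℂ
        * (Matrix.diagonal (fun v => (Complex.exp (2 * Real.pi * Complex.I / k) ^ (c v : ℕ)) ^ s))ᴴ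
      = (k : ℂ) • (G.lapMatrix ℂ + G.adjMatrix ℂ) := by
  set ω : ℂ := Complex.exp (2 * Real.pi * Complex.I / k) with hω
  have hk' : (k : ℂ) ≠ 0 := Nat.cast_ne_zero.2 hk.ne'
  have hω0 : ω ≠ 0 := Complex.exp_ne_zero _
  have hωk : ω ^ k = 1 := by
    rw [hω, ← Complex.exp_nat_mul]
    have : (k : ℂ) * (2 * Real.pi * Complex.I / k) = 2 * Real.pi * Complex.I := by
      field_simp
    rw [this, Complex.exp_two_pi_mul_I]
  have hstar : star ω = ω⁻¹ := by
    rw [hω, ← Complex.exp_neg]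
    show (starRingEnd ℂ) _ = _
    rw [← Complex.exp_conj]
    congr 1
    simp [map_div₀, map_ofNat, Complex.conj_I]
    ring
  have hinj : ∀ a b : ℕ, a < k → b < k → ω ^ a = ω ^ b → a = b := by
    intro a b ha hb h
    rw [hω, ← Complex.exp_nat_mul, ← Complex.exp_nat_mul,
      Complex.exp_eq_exp_iff_exists_int] at h
    obtain ⟨t, ht⟩ := h
    have h2πI : (2 * (Real.pi : ℂ) * Complex.I) ≠ 0 := by
      simp [Real.pi_ne_zero, Complex.I_ne_zero]
    have key : (a : ℂ) = b + t * k := by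
      have := ht
      field_simp at this ⊢
      have h2 : (a : ℂ) * (2 * (Real.pi:ℂ) * Complex.I)
          = (b + t * k) * (2 * (Real.pi:ℂ) * Complex.I) := by
        ring_nf
        ring_nf at this
        linear_combination (2 * (Real.pi:ℂ) * Complex.I) * this
      linear_combination mul_right_cancel₀ h2πI h2
    have keyz : (a : ℤ) = b + t * k := by exact_mod_cast key
    have hk2 : (0:ℤ) < k := by exact_mod_cast hk
    have ha' : (a:ℤ) < k := by exact_mod_cast ha
    have hb' : (b:ℤ) < k := by exact_mod_cast hb
    have h0a : (0:ℤ) ≤ a := by positivity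
    have h0b : (0:ℤ) ≤ b := by positivity
    rcases le_or_gt t (-1) with hT | hT
    · nlinarith [keyz]
    rcases le_or_gt 1 t with hT2 | hT2
    · nlinarith [keyz]
    · have ht0 : t = 0 := by omega
      rw [ht0] at keyz
      simp at keyz
      exact_mod_cast keyz
  funext u v
  rw [Matrix.sum_apply]
  by_cases huv : u = v
  · subst huv
    have hterm : ∀ s ∈ Finset.range k,
        (Matrix.diagonal (fun v => (ω ^ (c v : ℕ)) ^ s) * G.lapMatrix ℂ
          * (Matrix.diagonal (fun v => (ω ^ (c v : ℕ)) ^ s))ᴴ) u u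
        = (G.lapMatrix ℂ) u u := by
      intro s _
      rw [Matrix.diagonal_conjTranspose, Matrix.mul_diagonal, Matrix.diagonal_mul]
      simp only [Pi.star_apply]
      have h1 : (ω ^ (c u : ℕ)) ^ s * star ((ω ^ (c u : ℕ)) ^ s) = 1 := by
        rw [star_pow, star_pow, hstar, ← mul_pow, ← mul_pow, mul_inv_cancel₀ hω0,
          one_pow, one_pow]
      rw [mul_right_comm, h1, one_mul]
    rw [Finset.sum_congr rfl hterm, Finset.sum_const, Finset.card_range]
    simp [SimpleGraph.adjMatrix_apply, nsmul_eq_mul]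
  · by_cases hadj : G.Adj u v
    · have hlap : (G.lapMatrix ℂ) u v = -1 := by
        simp [SimpleGraph.lapMatrix, SimpleGraph.degMatrix, Matrix.sub_apply,
          Matrix.diagonal_apply_ne _ huv, hadj]
      have hadjm : (G.adjMatrix ℂ) u v = 1 := by simp [hadj]
      set ζ : ℂ := ω ^ (c u : ℕ) * (ω ^ (c v : ℕ))⁻¹ with hζ
      have hζk : ζ ^ k = 1 := by
        rw [hζ, mul_pow, inv_pow, ← pow_mul, ← pow_mul, mul_comm ((c u : ℕ)) k,
          mul_comm ((c v : ℕ)) k, pow_mul, pow_mul, hωk, one_pow, one_pow]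
        simp
      have hζ1 : ζ ≠ 1 := by
        intro h
        have : ω ^ (c u : ℕ) = ω ^ (c v : ℕ) := by
          field_simp [hζ] at h
          rw [hζ, mul_inv_eq_one₀ (pow_ne_zero _ hω0)] at h; exact h
        exact hc u v hadj (Fin.ext (hinj _ _ (c u).2 (c v).2 this))
      have hgeom : ∑ s ∈ Finset.range k, ζ ^ s = 0 := by
        have h1 := geom_sum_mul ζ k
        rw [hζk, sub_self] at h1
        rcases mul_eq_zero.1 h1 with h | h
        · exact h
        · exact absurd (sub_eq_zero.1 h) hζ1
      have hterm : ∀ s ∈ Finset.range k,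
          (Matrix.diagonal (fun v => (ω ^ (c v : ℕ)) ^ s) * G.lapMatrix ℂ
            * (Matrix.diagonal (fun v => (ω ^ (c v : ℕ)) ^ s))ᴴ) u v
          = - ζ ^ s := by
        intro s _
        rw [Matrix.diagonal_conjTranspose, Matrix.mul_diagonal, Matrix.diagonal_mul, hlap]
        simp only [Pi.star_apply]
        rw [star_pow, star_pow, hstar]
        have h2 : (ω⁻¹ ^ (c v : ℕ)) ^ s = ((ω ^ (c v : ℕ)) ^ s)⁻¹ := by
          rw [inv_pow, inv_pow]
        rw [h2, hζ, mul_pow, inv_pow]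
        ring
      rw [Finset.sum_congr rfl hterm,
        show (∑ s ∈ Finset.range k, -ζ ^ s) = -∑ s ∈ Finset.range k, ζ ^ s by simp,
        hgeom, neg_zero]
      rw [Matrix.smul_apply, Matrix.add_apply, hlap, hadjm]
      simp
    · have hlap : (G.lapMatrix ℂ) u v = 0 := by
        simp [SimpleGraph.lapMatrix, SimpleGraph.degMatrix, Matrix.sub_apply,
          Matrix.diagonal_apply_ne _ huv, hadj]
      have hadjm : (G.adjMatrix ℂ) u v = 0 := by simp [hadj]
      have hterm : ∀ s ∈ Finset.range k,
          (Matrix.diagonal (fun v => (ω ^ (c v : ℕ)) ^ s) * G.lapMatrix ℂ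
            * (Matrix.diagonal (fun v => (ω ^ (c v : ℕ)) ^ s))ᴴ) u v
          = 0 := by
        intro s _
        rw [Matrix.diagonal_conjTranspose, Matrix.mul_diagonal, Matrix.diagonal_mul, hlap]
        simp only [Pi.star_apply]
        ring
      rw [Finset.sum_congr rfl hterm, Finset.sum_const, Finset.card_range]
      rw [Matrix.smul_apply, Matrix.add_apply, hlap, hadjm]
      simp


lemma cmap_adj {n : ℕ} (G : SimpleGraph (Fin n)) [DecidableRel G.Adj] :
    cmap (G.adjMatrix ℝ) = G.adjMatrix ℂ := by
  ext i j
  simp [Matrix.map_apply, apply_ite]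

lemma cmap_lap {n : ℕ} (G : SimpleGraph (Fin n)) [DecidableRel G.Adj] :
    cmap (G.lapMatrix ℝ) = G.lapMatrix ℂ := by
  ext i j
  simp only [Matrix.map_apply, SimpleGraph.lapMatrix, SimpleGraph.degMatrix, Matrix.sub_apply,
    Matrix.diagonal_apply, SimpleGraph.adjMatrix_apply]
  split_ifs <;> simp only [Complex.ofRealHom_eq_coe] <;> push_cast <;> ring

lemma reTraceNonneg {n : ℕ} {M : Matrix (Fin n) (Fin n) ℝ} (hpsd : M.PosSemidef)
    {ι : Type} [Fintype ι] (V : Matrix (Fin n) ι ℂ) (hreal : ∀ i j, ∃ r : ℝ, V i j = (r : ℂ)) :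
    0 ≤ (Matrix.trace (Vᴴ * cmap M * V)).re := by
  choose r hr using hreal
  have hterm : ∀ j, (Vᴴ * cmap M * V) j j
      = ((star (fun i => r i j) ⬝ᵥ (M *ᵥ fun i => r i j) : ℝ) : ℂ) := by
    intro j
    rw [Matrix.mul_assoc, Matrix.mul_apply]
    simp only [Matrix.conjTranspose_apply, Matrix.mul_apply, Matrix.map_apply, hr,
      dotProduct, Matrix.mulVec, star_trivial, Complex.ofRealHom_eq_coe]
    push_cast [Complex.conj_ofReal]
    simp [Complex.star_def, Complex.conj_ofReal]
  rw [Matrix.trace]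
  simp only [Matrix.diag_apply, hterm]
  rw [← Complex.ofReal_sum, Complex.ofReal_re]
  exact Finset.sum_nonneg (fun j _ => hpsd.dotProduct_mulVec_nonneg _)


lemma selCols {n : ℕ} {M : Matrix (Fin n) (Fin n) ℝ} (hM : M.IsHermitian) (S : Finset (Fin n)) :
    ∃ V : Matrix (Fin n) {j // j ∈ S} ℂ,
      Vᴴ * V = 1 ∧ (∀ i j, ∃ r : ℝ, V i j = (r : ℂ)) ∧
      Matrix.trace (Vᴴ * cmap M * V) = ((∑ j ∈ S, hM.eigenvalues j : ℝ) : ℂ) := by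
  classical
  obtain ⟨P, hP1, hP2, hPs, hreal⟩ := cspec hM
  set V : Matrix (Fin n) {j // j ∈ S} ℂ := Matrix.of (fun i j => P i j.1) with hV
  have hPcol : ∀ a b : Fin n, (∑ i, (starRingEnd ℂ) (P i a) * P i b) = (1 : Matrix (Fin n) (Fin n) ℂ) a b := by
    intro a b
    have h := congrFun (congrFun hP1 a) b
    rw [Matrix.mul_apply] at h
    simpa [Matrix.conjTranspose_apply] using h
  have hVV : Vᴴ * V = 1 := by
    ext j j'
    rw [Matrix.mul_apply]
    have : ∀ i, Vᴴ j i * V i j' = (starRingEnd ℂ) (P i j.1) * P i j'.1 := by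
      intro i; simp [hV, Matrix.conjTranspose_apply]
    rw [Finset.sum_congr rfl (fun i _ => this i), hPcol]
    by_cases h : j = j'
    · subst h; simp [Matrix.one_apply]
    · rw [Matrix.one_apply_ne h, Matrix.one_apply_ne (fun hh : j.1 = j'.1 => h (Subtype.ext hh))]
  refine ⟨V, hVV, fun i j => ⟨(P i j.1).re, ?_⟩, ?_⟩
  · obtain ⟨r, hre⟩ := hreal i j.1
    simp [hV, hre]
  · have hMP : cmap M * P = P * diagonal (fun i => (hM.eigenvalues i : ℂ)) := by
      rw [hPs, Matrix.mul_assoc, hP1, Matrix.mul_one]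
    have hMV : cmap M * V = Matrix.of (fun i j => P i j.1 * (hM.eigenvalues j.1 : ℂ)) := by
      ext i j
      have h1 : (cmap M * V) i j = (cmap M * P) i j.1 := by
        simp [Matrix.mul_apply, hV]
      rw [h1, hMP, Matrix.mul_diagonal]
      rfl
    rw [Matrix.mul_assoc, hMV, Matrix.trace]
    have hterm : ∀ j : {j // j ∈ S}, (Vᴴ * Matrix.of (fun i j => P i j.1 * (hM.eigenvalues j.1 : ℂ))) j j = (hM.eigenvalues j.1 : ℂ) := by
      intro j
      rw [Matrix.mul_apply]
      have : ∀ i, Vᴴ j i * (Matrix.of (fun i j => P i j.1 * (hM.eigenvalues j.1 : ℂ))) i j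
          = ((starRingEnd ℂ) (P i j.1) * P i j.1) * (hM.eigenvalues j.1 : ℂ) := by
        intro i
        simp [hV, Matrix.conjTranspose_apply]
        ring
      rw [Finset.sum_congr rfl (fun i _ => this i), ← Finset.sum_mul, hPcol]
      simp [Matrix.one_apply]
    simp only [Matrix.diag_apply, hterm]
    rw [show ((∑ j ∈ S, hM.eigenvalues j : ℝ) : ℂ)
        = ((∑ x : {j // j ∈ S}, hM.eigenvalues x.1 : ℝ) : ℂ) by rw [Finset.sum_coe_sort],
      Complex.ofReal_sum]

/-- **Generalized Nikiforov bound.** For a finite simple graph `G` on `n` vertices with at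
least one edge and chromatic number `χ`, for every `1 ≤ m ≤ n`:
`Σ_{i=1}^m μ_i ≤ (χ - 1)·Σ_{i=1}^m (θ_i - μ_i)`.
Here `μ` and `θ` are the non-increasing enumerations of the eigenvalues of the adjacency
matrix and of the Laplacian matrix, respectively. -/
theorem stmt_9 {n : ℕ} (hn : 0 < n) (G : SimpleGraph (Fin n)) [DecidableRel G.Adj]
    (he : ∃ v w : Fin n, G.Adj v w)
    (χ : ℕ) (hχ : G.chromaticNumber = (χ : ℕ∞))
    (hA : (G.adjMatrix ℝ).IsHermitian)
    (hL : (G.lapMatrix ℝ).IsHermitian)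
    (μ θ : Fin n → ℝ)
    (hμa : Antitone μ) (hμ : ∃ e : Equiv.Perm (Fin n), μ = hA.eigenvalues ∘ e)
    (hθa : Antitone θ) (hθ : ∃ e : Equiv.Perm (Fin n), θ = hL.eigenvalues ∘ e)
    (m : ℕ) (hm1 : 1 ≤ m) (hmn : m ≤ n) :
    (∑ i ∈ Finset.univ.filter (fun i : Fin n => (i : ℕ) < m), μ i) ≤
      ((χ : ℝ) - 1) * (∑ i ∈ Finset.univ.filter (fun i : Fin n => (i : ℕ) < m), (θ i - μ i)) := by
  classical
  obtain ⟨eμ, heμ⟩ := hμ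
  obtain ⟨eθ, heθ⟩ := hθ
  obtain ⟨v0, w0, hvw⟩ := he
  have hcolorable : G.Colorable χ := SimpleGraph.chromaticNumber_le_iff_colorable.1 (le_of_eq hχ)
  obtain ⟨C⟩ := hcolorable
  have hχ2 : 2 ≤ χ := by
    rcases Nat.lt_or_ge χ 2 with h | h
    · interval_cases χ
      · exact (C v0).elim0
      · exact absurd (Subsingleton.elim (C v0) (C w0)) (C.valid hvw)
    · exact h
  have hχ0 : 0 < χ := by omega
  set Sf := Finset.univ.filter (fun i : Fin n => (i : ℕ) < m) with hSf
  set S : Finset (Fin n) := Sf.image eμ with hS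
  have hcardS : Fintype.card {j // j ∈ S} = m := by
    rw [Fintype.card_coe, hS, Finset.card_image_of_injective _ eμ.injective, hSf,
      card_filter_lt_fin hmn]
  obtain ⟨V, hVV, hVreal, hVtr⟩ := selCols hA S
  have hsum1 : ∑ j ∈ S, hA.eigenvalues j = ∑ i ∈ Sf, μ i := by
    rw [hS, Finset.sum_image (fun a _ b _ h => eμ.injective h)]
    exact (Finset.sum_congr rfl (fun i _ => by rw [heμ]; rfl)).symm
  set ω : ℂ := Complex.exp (2 * Real.pi * Complex.I / χ) with hω
  set Dg : ℕ → Matrix (Fin n) (Fin n) ℂ :=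
    fun s => Matrix.diagonal (fun v => (ω ^ (C v : ℕ)) ^ s) with hDg
  have hω0 : ω ≠ 0 := Complex.exp_ne_zero _
  have hstar : star ω = ω⁻¹ := by
    rw [hω, ← Complex.exp_neg]
    show (starRingEnd ℂ) _ = _
    rw [← Complex.exp_conj]
    congr 1
    simp [map_div₀, map_ofNat, Complex.conj_I]
    ring
  have hDunit : ∀ s, Dg s * (Dg s)ᴴ = 1 := by
    intro s
    have h1 : Dg s * (Dg s)ᴴ
        = Matrix.diagonal (fun v => (ω ^ (C v : ℕ)) ^ s * star ((ω ^ (C v : ℕ)) ^ s)) := by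
      simp only [hDg, Matrix.diagonal_conjTranspose, Matrix.diagonal_mul_diagonal]
      rfl
    have h2 : (fun v : Fin n => (ω ^ (C v : ℕ)) ^ s * star ((ω ^ (C v : ℕ)) ^ s))
        = fun _ => (1 : ℂ) := by
      funext v
      rw [star_pow, star_pow, hstar, ← mul_pow, ← mul_pow, mul_inv_cancel₀ hω0,
        one_pow, one_pow]
    rw [h1, h2, Matrix.diagonal_one]
  have hD0 : Dg 0 = 1 := by
    simp [hDg]
  have hident : ∑ s ∈ Finset.range χ, Dg s * cmap (G.lapMatrix ℝ) * (Dg s)ᴴ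
      = (χ : ℂ) • (cmap (G.lapMatrix ℝ) + cmap (G.adjMatrix ℝ)) := by
    rw [cmap_lap, cmap_adj]
    exact colorSum hχ0 G (fun v => C v) (fun u v h => C.valid h)
  set TA : ℝ := (Matrix.trace (Vᴴ * cmap (G.adjMatrix ℝ) * V)).re with hTA
  set TL : ℝ := (Matrix.trace (Vᴴ * cmap (G.lapMatrix ℝ) * V)).re with hTL
  set Θ : ℝ := ∑ i ∈ Sf, θ i with hΘ
  have hTAval : TA = ∑ i ∈ Sf, μ i := by rw [hTA, hVtr, Complex.ofReal_re, hsum1]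
  have hTL0 : 0 ≤ TL := reTraceNonneg (G.posSemidef_lapMatrix ℝ) V hVreal
  have hfan : ∀ s, (Matrix.trace (Vᴴ * (Dg s * cmap (G.lapMatrix ℝ) * (Dg s)ᴴ) * V)).re ≤ Θ := by
    intro s
    have hWW : ((Dg s)ᴴ * V)ᴴ * ((Dg s)ᴴ * V) = 1 := by
      rw [Matrix.conjTranspose_mul, Matrix.conjTranspose_conjTranspose, Matrix.mul_assoc,
        ← Matrix.mul_assoc (Dg s), hDunit s, Matrix.one_mul, hVV]
    have h := fanTrace hL hm1 hmn θ hθa eθ heθ hcardS ((Dg s)ᴴ * V) hWW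
    have heq : ((Dg s)ᴴ * V)ᴴ * cmap (G.lapMatrix ℝ) * ((Dg s)ᴴ * V)
        = Vᴴ * (Dg s * cmap (G.lapMatrix ℝ) * (Dg s)ᴴ) * V := by
      rw [Matrix.conjTranspose_mul, Matrix.conjTranspose_conjTranspose]
      simp only [Matrix.mul_assoc]
    rw [heq] at h
    exact h
  have hsplit : ∑ s ∈ Finset.range χ,
      (Matrix.trace (Vᴴ * (Dg s * cmap (G.lapMatrix ℝ) * (Dg s)ᴴ) * V)).re
      = χ * (TL + TA) := by
    have h1 : ∑ s ∈ Finset.range χ, Vᴴ * (Dg s * cmap (G.lapMatrix ℝ) * (Dg s)ᴴ) * V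
        = Vᴴ * ((χ : ℂ) • (cmap (G.lapMatrix ℝ) + cmap (G.adjMatrix ℝ))) * V := by
      rw [← hident, Matrix.mul_sum, Matrix.sum_mul]
    have h2 : ∑ s ∈ Finset.range χ,
        (Matrix.trace (Vᴴ * (Dg s * cmap (G.lapMatrix ℝ) * (Dg s)ᴴ) * V))
        = Matrix.trace (Vᴴ * ((χ : ℂ) • (cmap (G.lapMatrix ℝ) + cmap (G.adjMatrix ℝ))) * V) := by
      rw [← Matrix.trace_sum, h1]
    have h3 : Vᴴ * ((χ : ℂ) • (cmap (G.lapMatrix ℝ) + cmap (G.adjMatrix ℝ))) * V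
        = (χ : ℂ) • (Vᴴ * cmap (G.lapMatrix ℝ) * V + Vᴴ * cmap (G.adjMatrix ℝ) * V) := by
      rw [Matrix.mul_smul, Matrix.smul_mul, Matrix.mul_add, Matrix.add_mul]
    calc ∑ s ∈ Finset.range χ,
        (Matrix.trace (Vᴴ * (Dg s * cmap (G.lapMatrix ℝ) * (Dg s)ᴴ) * V)).re
        = (∑ s ∈ Finset.range χ,
            Matrix.trace (Vᴴ * (Dg s * cmap (G.lapMatrix ℝ) * (Dg s)ᴴ) * V)).re := by
          rw [Complex.re_sum]
      _ = (Matrix.trace ((χ : ℂ) • (Vᴴ * cmap (G.lapMatrix ℝ) * V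
            + Vᴴ * cmap (G.adjMatrix ℝ) * V))).re := by rw [h2, h3]
      _ = χ * (TL + TA) := by
          rw [Matrix.trace_smul, Matrix.trace_add, smul_eq_mul, Complex.mul_re]
          rw [hTL, hTA]
          simp
  have h0 : (Matrix.trace (Vᴴ * (Dg 0 * cmap (G.lapMatrix ℝ) * (Dg 0)ᴴ) * V)).re = TL := by
    rw [hD0]
    simp [Matrix.conjTranspose_one]
    rw [hTL]
  have herase : ∑ s ∈ (Finset.range χ).erase 0,
      (Matrix.trace (Vᴴ * (Dg s * cmap (G.lapMatrix ℝ) * (Dg s)ᴴ) * V)).re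
      ≤ ((χ - 1 : ℕ) : ℝ) * Θ := by
    have hb := Finset.sum_le_card_nsmul ((Finset.range χ).erase 0) _ Θ (fun s _ => hfan s)
    rwa [Finset.card_erase_of_mem (Finset.mem_range.2 hχ0), Finset.card_range,
      nsmul_eq_mul] at hb
  have hcomb : (χ : ℝ) * (TL + TA) ≤ TL + ((χ - 1 : ℕ) : ℝ) * Θ := by
    have hsum := Finset.add_sum_erase (Finset.range χ)
      (fun s => (Matrix.trace (Vᴴ * (Dg s * cmap (G.lapMatrix ℝ) * (Dg s)ᴴ) * V)).re)
      (Finset.mem_range.2 hχ0)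
    rw [hsplit] at hsum
    linarith [hsum, h0, herase]
  have hcast : ((χ - 1 : ℕ) : ℝ) = (χ : ℝ) - 1 := by
    push_cast [Nat.cast_sub hχ0]
    ring
  have hkey : (χ : ℝ) * TA ≤ ((χ : ℝ) - 1) * Θ := by
    rw [hcast] at hcomb
    nlinarith [hcomb, hTL0, hχ2]
  rw [Finset.sum_sub_distrib]
  rw [← hTAval, ← hΘ]
  nlinarith [hkey, hχ2]
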